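/- Let A > 0 be a real number and let f ∈ ℝ[x,y,z] be a nonzero homogeneous polynomial of degree n satisfying the first-order PDE A y z ∂f/∂x − x z ∂f/∂y + x y ∂f/∂z = 0. Then n is even, say n = 2m, and there exist real numbers a₀, a₁, …, a_m such that f = Σ_{i=0}^{m} aᵢ (x² + A y²)^{m−i} (y² + z²)^{i}; in particular f belongs to the ℝ-subalgebra of ℝ[x,y,z] generated by x² + A y² and y² + z². -/

import Mathlib

open MvPolynomial Finsupp

namespace GD
noncomputable section


def M (a b c : ℕ) : Fin 3 →₀ ℕ := single 0 a + single 1 b + single 2 c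

@[simp] lemma M_apply0 (a b c : ℕ) : (M a b c) 0 = a := by simp [M]
@[simp] lemma M_apply1 (a b c : ℕ) : (M a b c) 1 = b := by simp [M]
@[simp] lemma M_apply2 (a b c : ℕ) : (M a b c) 2 = c := by simp [M]

lemma M_add0 (a b c x : ℕ) : M (a + x) b c = single 0 x + M a b c := by
  simp [M, single_add]; abel

lemma M_add1 (a b c x : ℕ) : M a (b + x) c = single 1 x + M a b c := by
  simp [M, single_add]; abel

lemma M_add2 (a b c x : ℕ) : M a b (c + x) = single 2 x + M a b c := by
  simp [M, single_add]; abel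

lemma M_radd0 (a b c x : ℕ) : M a b c + single 0 x = M (a + x) b c := by
  rw [M_add0]; abel

lemma M_radd1 (a b c x : ℕ) : M a b c + single 1 x = M a (b + x) c := by
  rw [M_add1]; abel

lemma M_radd2 (a b c x : ℕ) : M a b c + single 2 x = M a b (c + x) := by
  rw [M_add2]; abel

lemma coeff_pderiv (i : Fin 3) (d : Fin 3 →₀ ℕ) (p : MvPolynomial (Fin 3) ℝ) :
    coeff d (pderiv i p) = (d i + 1) * coeff (d + single i 1) p := by
  induction p using MvPolynomial.induction_on' with
  | monomial s a =>
    rw [pderiv_monomial, coeff_monomial, coeff_monomial]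
    by_cases h : s = d + single i 1
    · subst h
      rw [if_pos]
      · simp [mul_comm]
      · ext j
        by_cases hj : j = i <;> simp [hj]
    · rw [if_neg h]
      by_cases h2 : s - single i 1 = d
      · rw [if_pos h2]
        by_cases hsi : s i = 0
        · simp [hsi]
        · exfalso; apply h
          ext j
          by_cases hj : j = i
          · subst hj
            have := congrArg (fun t => t j) h2
            simp [Finsupp.tsub_apply] at this
            simp [← this]
            omega
          · have := congrArg (fun t => t j) h2
            simp [Finsupp.tsub_apply, Finsupp.single_eq_of_ne' (Ne.symm hj)] at this ⊢
            omega
      · rw [if_neg h2]; ring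
  | add p q hp hq =>
    simp [coeff_add, hp, hq]; ring

lemma coeff_X_mul_zero (s : Fin 3) (m : Fin 3 →₀ ℕ) (p : MvPolynomial (Fin 3) ℝ)
    (h : m s = 0) : coeff m (X s * p) = 0 := by
  rw [coeff_X_mul']
  simp [Finsupp.mem_support_iff, h]

def Dop (A : ℝ) (p : MvPolynomial (Fin 3) ℝ) : MvPolynomial (Fin 3) ℝ :=
  MvPolynomial.C A * X 1 * X 2 * pderiv (0 : Fin 3) p
    - X 0 * X 2 * pderiv (1 : Fin 3) p
    + X 0 * X 1 * pderiv (2 : Fin 3) p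

variable {A : ℝ} {p : MvPolynomial (Fin 3) ℝ}

lemma e1 (A : ℝ) (p : MvPolynomial (Fin 3) ℝ) : MvPolynomial.C A * X 1 * X 2 * pderiv (0 : Fin 3) p
    = MvPolynomial.C A * (X 1 * (X 2 * pderiv (0 : Fin 3) p)) := by ring
lemma e2 (p : MvPolynomial (Fin 3) ℝ) : X 0 * X 2 * pderiv (1 : Fin 3) p
    = X 0 * (X 2 * pderiv (1 : Fin 3) p) := by ring
lemma e3 (p : MvPolynomial (Fin 3) ℝ) : X 0 * X 1 * pderiv (2 : Fin 3) p
    = X 0 * (X 1 * pderiv (2 : Fin 3) p) := by ring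

lemma master (hD : Dop A p = 0) (a b c : ℕ) :
    A * ((a+2) * coeff (M (a+2) b c) p)
      - (b+2) * coeff (M a (b+2) c) p
      + (c+2) * coeff (M a b (c+2)) p = 0 := by
  have t1 : coeff (M (a+1) (b+1) (c+1)) (MvPolynomial.C A * X 1 * X 2 * pderiv (0 : Fin 3) p)
      = A * ((a+2) * coeff (M (a+2) b c) p) := by
    rw [e1, coeff_C_mul, M_add1, coeff_X_mul, M_add2, coeff_X_mul, coeff_pderiv, M_radd0]
    have h1 : a + 1 + 1 = a + 2 := by omega
    rw [h1]
    simp only [M_apply0]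
    push_cast
    ring
  have t2 : coeff (M (a+1) (b+1) (c+1)) (X 0 * X 2 * pderiv (1 : Fin 3) p)
      = (b+2) * coeff (M a (b+2) c) p := by
    rw [e2, M_add0, coeff_X_mul, M_add2, coeff_X_mul, coeff_pderiv, M_radd1]
    have h1 : b + 1 + 1 = b + 2 := by omega
    rw [h1]
    simp only [M_apply1]
    push_cast
    ring
  have t3 : coeff (M (a+1) (b+1) (c+1)) (X 0 * X 1 * pderiv (2 : Fin 3) p)
      = (c+2) * coeff (M a b (c+2)) p := by
    rw [e3, M_add0, coeff_X_mul, M_add1, coeff_X_mul, coeff_pderiv, M_radd2]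
    have h1 : c + 1 + 1 = c + 2 := by omega
    rw [h1]
    simp only [M_apply2]
    push_cast
    ring
  have h := congrArg (coeff (M (a+1) (b+1) (c+1))) hD
  rw [Dop, coeff_add, coeff_sub, coeff_zero, t1, t2, t3] at h
  linarith [h]

lemma bdry3 (hA : A ≠ 0) (hD : Dop A p = 0) (b c : ℕ) : coeff (M 1 b c) p = 0 := by
  have t1 : coeff (M 0 (b+1) (c+1)) (MvPolynomial.C A * X 1 * X 2 * pderiv (0 : Fin 3) p)
      = A * coeff (M 1 b c) p := by
    rw [e1, coeff_C_mul, M_add1, coeff_X_mul, M_add2, coeff_X_mul, coeff_pderiv, M_radd0]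
    simp
  have t2 : coeff (M 0 (b+1) (c+1)) (X 0 * X 2 * pderiv (1 : Fin 3) p) = 0 := by
    rw [e2, coeff_X_mul_zero 0 _ _ (by simp)]
  have t3 : coeff (M 0 (b+1) (c+1)) (X 0 * X 1 * pderiv (2 : Fin 3) p) = 0 := by
    rw [e3, coeff_X_mul_zero 0 _ _ (by simp)]
  have h := congrArg (coeff (M 0 (b+1) (c+1))) hD
  rw [Dop, coeff_add, coeff_sub, coeff_zero, t1, t2, t3] at h
  have h' : A * coeff (M 1 b c) p = 0 := by linarith [h]
  exact (mul_eq_zero.mp h').resolve_left hA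

lemma bdry2 (hD : Dop A p = 0) (a c : ℕ) : coeff (M a 1 c) p = 0 := by
  have t1 : coeff (M (a+1) 0 (c+1)) (MvPolynomial.C A * X 1 * X 2 * pderiv (0 : Fin 3) p)
      = 0 := by
    rw [e1, coeff_C_mul, coeff_X_mul_zero 1 _ _ (by simp)]
    ring
  have t2 : coeff (M (a+1) 0 (c+1)) (X 0 * X 2 * pderiv (1 : Fin 3) p)
      = coeff (M a 1 c) p := by
    rw [e2, M_add0, coeff_X_mul, M_add2, coeff_X_mul, coeff_pderiv, M_radd1]
    simp
  have t3 : coeff (M (a+1) 0 (c+1)) (X 0 * X 1 * pderiv (2 : Fin 3) p) = 0 := by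
    rw [e3, M_add0, coeff_X_mul, coeff_X_mul_zero 1 _ _ (by simp)]
  have h := congrArg (coeff (M (a+1) 0 (c+1))) hD
  rw [Dop, coeff_add, coeff_sub, coeff_zero, t1, t2, t3] at h
  linarith [h]

lemma bdry1 (hD : Dop A p = 0) (a b : ℕ) : coeff (M a b 1) p = 0 := by
  have t1 : coeff (M (a+1) (b+1) 0) (MvPolynomial.C A * X 1 * X 2 * pderiv (0 : Fin 3) p)
      = 0 := by
    rw [e1, coeff_C_mul, M_add1, coeff_X_mul, coeff_X_mul_zero 2 _ _ (by simp)]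
    ring
  have t2 : coeff (M (a+1) (b+1) 0) (X 0 * X 2 * pderiv (1 : Fin 3) p) = 0 := by
    rw [e2, M_add0, coeff_X_mul, coeff_X_mul_zero 2 _ _ (by simp)]
  have t3 : coeff (M (a+1) (b+1) 0) (X 0 * X 1 * pderiv (2 : Fin 3) p)
      = coeff (M a b 1) p := by
    rw [e3, M_add0, coeff_X_mul, M_add1, coeff_X_mul, coeff_pderiv, M_radd2]
    simp
  have h := congrArg (coeff (M (a+1) (b+1) 0)) hD
  rw [Dop, coeff_add, coeff_sub, coeff_zero, t1, t2, t3] at h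
  linarith [h]


variable {A : ℝ} {p : MvPolynomial (Fin 3) ℝ}

lemma oddx (hA : A ≠ 0) (hD : Dop A p = 0) : ∀ k b c, coeff (M (2*k+1) b c) p = 0 := by
  intro k
  induction k with
  | zero => intro b c; simpa using bdry3 hA hD b c
  | succ k ih =>
    intro b c
    have h := master hD (2*k+1) b c
    rw [ih (b+2) c, ih b (c+2)] at h
    have hy : ((((2*k+1:ℕ)):ℝ)+2) ≠ 0 := by positivity
    have h0 : A * (((((2*k+1:ℕ)):ℝ))+2) * coeff (M (2*k+1+2) b c) p = 0 := by linarith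
    have h1 := (mul_eq_zero.mp h0).resolve_left (mul_ne_zero hA hy)
    rw [show 2*(k+1)+1 = 2*k+1+2 by omega]
    exact h1

lemma oddy (hD : Dop A p = 0) : ∀ k a c, coeff (M a (2*k+1) c) p = 0 := by
  intro k
  induction k with
  | zero => intro a c; simpa using bdry2 hD a c
  | succ k ih =>
    intro a c
    have h := master hD a (2*k+1) c
    rw [ih (a+2) c, ih a (c+2)] at h
    have hy : ((((2*k+1:ℕ)):ℝ)+2) ≠ 0 := by positivity
    have h0 : (((((2*k+1:ℕ)):ℝ))+2) * coeff (M a (2*k+1+2) c) p = 0 := by linarith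
    have h1 := (mul_eq_zero.mp h0).resolve_left hy
    rw [show 2*(k+1)+1 = 2*k+1+2 by omega]
    exact h1

lemma oddz (hD : Dop A p = 0) : ∀ k a b, coeff (M a b (2*k+1)) p = 0 := by
  intro k
  induction k with
  | zero => intro a b; simpa using bdry1 hD a b
  | succ k ih =>
    intro a b
    have h := master hD a b (2*k+1)
    rw [ih (a+2) b, ih a (b+2)] at h
    have hy : ((((2*k+1:ℕ)):ℝ)+2) ≠ 0 := by positivity
    have h0 : (((((2*k+1:ℕ)):ℝ))+2) * coeff (M a b (2*k+1+2)) p = 0 := by linarith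
    have h1 := (mul_eq_zero.mp h0).resolve_left hy
    rw [show 2*(k+1)+1 = 2*k+1+2 by omega]
    exact h1

lemma odd_kill (hA : A ≠ 0) (hD : Dop A p = 0) (a b c : ℕ)
    (h : ¬(a % 2 = 0 ∧ b % 2 = 0 ∧ c % 2 = 0)) : coeff (M a b c) p = 0 := by
  by_cases ha : a % 2 = 0
  · by_cases hb : b % 2 = 0
    · have hc : ¬ c % 2 = 0 := by tauto
      obtain ⟨k, rfl⟩ : ∃ k, c = 2*k+1 := ⟨c/2, by omega⟩
      exact oddz hD k a b
    · obtain ⟨k, rfl⟩ : ∃ k, b = 2*k+1 := ⟨b/2, by omega⟩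
      exact oddy hD k a c
  · obtain ⟨k, rfl⟩ : ∃ k, a = 2*k+1 := ⟨a/2, by omega⟩
    exact oddx hA hD k b c


lemma M_eq_zero_iff (a b c : ℕ) : M a b c = 0 ↔ a = 0 ∧ b = 0 ∧ c = 0 := by
  constructor
  · intro h
    refine ⟨?_, ?_, ?_⟩
    · have := congrArg (fun f => f 0) h; simpa [M_apply0] using this
    · have := congrArg (fun f => f 1) h; simpa [M_apply1] using this
    · have := congrArg (fun f => f 2) h; simpa [M_apply2] using this
  · rintro ⟨rfl, rfl, rfl⟩; simp [M]

lemma coeff_Xsq_mul (s : Fin 3) (d : Fin 3 →₀ ℕ) (p : MvPolynomial (Fin 3) ℝ) :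
    coeff (single s 2 + d) (X s ^ 2 * p) = coeff d p := by
  have e : (X s : MvPolynomial (Fin 3) ℝ) ^ 2 * p = X s * (X s * p) := by ring
  have e2 : single s 2 + d = single s 1 + (single s 1 + d) := by
    rw [show (2:ℕ) = 1 + 1 from rfl, single_add]; abel
  rw [e, e2, coeff_X_mul, coeff_X_mul]

lemma coeff_Xsq_mul_zero (s : Fin 3) (d : Fin 3 →₀ ℕ) (p : MvPolynomial (Fin 3) ℝ)
    (h : d s = 0) : coeff d (X s ^ 2 * p) = 0 := by
  have e : (X s : MvPolynomial (Fin 3) ℝ) ^ 2 * p = X s * (X s * p) := by ring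
  rw [e, coeff_X_mul_zero s d _ h]

def Q : MvPolynomial (Fin 3) ℝ := X 1 ^ 2 + X 2 ^ 2
def P (A : ℝ) : MvPolynomial (Fin 3) ℝ := X 0 ^ 2 + MvPolynomial.C A * X 1 ^ 2

lemma coeffQ (i : ℕ) : ∀ s t : ℕ, coeff (M 0 (2*s) (2*t)) (Q ^ i)
    = if s + t = i then (i.choose t : ℝ) else 0 := by
  induction i with
  | zero =>
    intro s t
    rw [pow_zero, coeff_one]
    by_cases h : s = 0 ∧ t = 0
    · obtain ⟨rfl, rfl⟩ := h
      rw [if_pos ((M_eq_zero_iff _ _ _).mpr ⟨rfl, by omega, by omega⟩).symm, if_pos (by omega)]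
      simp
    · rw [if_neg (fun hh => h (by
        have := (M_eq_zero_iff 0 (2*s) (2*t)).mp hh.symm
        omega)), if_neg (by omega)]
  | succ i ih =>
    intro s t
    have e : Q ^ (i+1) = X 1 ^ 2 * Q ^ i + X 2 ^ 2 * Q ^ i := by
      rw [pow_succ, Q]; ring
    rw [e, coeff_add]
    rcases s with _ | s <;> rcases t with _ | t
    · rw [coeff_Xsq_mul_zero 1 _ _ (by simp [M_apply1]),
        coeff_Xsq_mul_zero 2 _ _ (by simp [M_apply2]), if_neg (by omega)]
      ring
    · rw [coeff_Xsq_mul_zero 1 _ _ (by simp [M_apply1]),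
        show M 0 (2*0) (2*(t+1)) = single 2 2 + M 0 (2*0) (2*t) by
          rw [show 2*(t+1) = 2*t + 2 by ring, M_add2],
        coeff_Xsq_mul, ih 0 t]
      by_cases h : t = i
      · subst h
        rw [if_pos (by omega), if_pos (by omega), Nat.choose_self, Nat.choose_self]
        ring
      · rw [if_neg (by omega), if_neg (by omega)]
        ring
    · rw [coeff_Xsq_mul_zero 2 _ _ (by simp [M_apply2]),
        show M 0 (2*(s+1)) (2*0) = single 1 2 + M 0 (2*s) (2*0) by
          rw [show 2*(s+1) = 2*s + 2 by ring, M_add1],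
        coeff_Xsq_mul, ih s 0]
      by_cases h : s = i
      · subst h
        rw [if_pos (by omega), if_pos (by omega), Nat.choose_zero_right,
          Nat.choose_zero_right]
        ring
      · rw [if_neg (by omega), if_neg (by omega)]
        ring
    · have c1 : coeff (M 0 (2*(s+1)) (2*(t+1))) (X 1 ^ 2 * Q ^ i)
          = if s + (t+1) = i then ((i.choose (t+1) : ℕ) : ℝ) else 0 := by
        rw [show M 0 (2*(s+1)) (2*(t+1)) = single 1 2 + M 0 (2*s) (2*(t+1)) by
            rw [show 2*(s+1) = 2*s + 2 by ring, M_add1],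
          coeff_Xsq_mul, ih s (t+1)]
      have c2 : coeff (M 0 (2*(s+1)) (2*(t+1))) (X 2 ^ 2 * Q ^ i)
          = if (s+1) + t = i then ((i.choose t : ℕ) : ℝ) else 0 := by
        rw [show M 0 (2*(s+1)) (2*(t+1)) = single 2 2 + M 0 (2*(s+1)) (2*t) by
            rw [show 2*(t+1) = 2*t + 2 by ring, M_add2],
          coeff_Xsq_mul, ih (s+1) t]
      rw [c1, c2]
      by_cases h : s + t + 1 = i
      · rw [if_pos (by omega), if_pos (by omega), if_pos (by omega),
          Nat.choose_succ_succ i t]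
        push_cast
        ring
      · rw [if_neg (by omega), if_neg (by omega), if_neg (by omega)]
        ring

lemma coeffPQ (A : ℝ) (j : ℕ) : ∀ i s t : ℕ, coeff (M 0 (2*s) (2*t)) (P A ^ j * Q ^ i)
    = if s + t = j + i ∧ t ≤ i then A ^ j * (i.choose t : ℝ) else 0 := by
  induction j with
  | zero =>
    intro i s t
    rw [pow_zero, one_mul, coeffQ]
    split_ifs with h1 h2 h2
    · simp
    · exact absurd ⟨by omega, by omega⟩ h2
    · exfalso; omega
    · rfl
  | succ j ih =>
    intro i s t
    have e : P A ^ (j+1) * Q ^ i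
        = X 0 ^ 2 * (P A ^ j * Q ^ i) + MvPolynomial.C A * (X 1 ^ 2 * (P A ^ j * Q ^ i)) := by
      rw [pow_succ, P]; ring
    rw [e, coeff_add, coeff_Xsq_mul_zero 0 _ _ (by simp [M_apply0]), coeff_C_mul]
    rcases s with _ | s
    · rw [coeff_Xsq_mul_zero 1 _ _ (by simp [M_apply1]), if_neg (by omega)]
      ring
    · rw [show M 0 (2*(s+1)) (2*t) = single 1 2 + M 0 (2*s) (2*t) by
          rw [show 2*(s+1) = 2*s + 2 by ring, M_add1],
        coeff_Xsq_mul, ih i s t]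
      by_cases h : s + t = j + i ∧ t ≤ i
      · rw [if_pos h, if_pos (by omega)]
        ring
      · rw [if_neg h, if_neg (by
          intro hh
          exact h ⟨by omega, hh.2⟩)]
        ring


lemma Dop_mul (p q : MvPolynomial (Fin 3) ℝ) :
    Dop A (p * q) = Dop A p * q + p * Dop A q := by
  simp only [Dop, pderiv_mul]
  ring

lemma Dop_sub (p q : MvPolynomial (Fin 3) ℝ) : Dop A (p - q) = Dop A p - Dop A q := by
  simp only [Dop, map_sub]
  ring

lemma Dop_C_mul (r : ℝ) (p : MvPolynomial (Fin 3) ℝ) :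
    Dop A (MvPolynomial.C r * p) = MvPolynomial.C r * Dop A p := by
  simp only [Dop, pderiv_C_mul]
  ring

lemma Dop_one : Dop A (1 : MvPolynomial (Fin 3) ℝ) = 0 := by
  simp [Dop]

lemma Dop_pow {p : MvPolynomial (Fin 3) ℝ} (hp : Dop A p = 0) (k : ℕ) :
    Dop A (p ^ k) = 0 := by
  induction k with
  | zero => simpa using Dop_one
  | succ k ih => rw [pow_succ, Dop_mul, ih, hp]; ring

lemma Dop_P : Dop A (P A) = 0 := by
  simp only [Dop, P, map_add, pderiv_C_mul, pderiv_pow, pderiv_X_self,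
    pderiv_X_of_ne (show (0:Fin 3) ≠ 1 by decide), pderiv_X_of_ne (show (1:Fin 3) ≠ 0 by decide),
    pderiv_X_of_ne (show (0:Fin 3) ≠ 2 by decide), pderiv_X_of_ne (show (1:Fin 3) ≠ 2 by decide)]
  ring

lemma Dop_Q : Dop A Q = 0 := by
  simp only [Dop, Q, map_add, pderiv_pow, pderiv_X_self,
    pderiv_X_of_ne (show (1:Fin 3) ≠ 0 by decide), pderiv_X_of_ne (show (2:Fin 3) ≠ 0 by decide),
    pderiv_X_of_ne (show (2:Fin 3) ≠ 1 by decide), pderiv_X_of_ne (show (1:Fin 3) ≠ 2 by decide)]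
  ring

lemma Dop_sum {ι : Type*} (s : Finset ι) (F : ι → MvPolynomial (Fin 3) ℝ)
    (h : ∀ i ∈ s, Dop A (F i) = 0) : Dop A (∑ i ∈ s, F i) = 0 := by
  classical
  induction s using Finset.induction_on with
  | empty => simp [Dop]
  | @insert x s' hx ih =>
    rw [Finset.sum_insert hx]
    have e : Dop A (F x + ∑ i ∈ s', F i) = Dop A (F x) + Dop A (∑ i ∈ s', F i) := by
      simp only [Dop, map_add]; ring
    rw [e, h x (Finset.mem_insert_self x s'), ih (fun i hi => h i (Finset.mem_insert_of_mem hi))]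
    ring



lemma M_eta (d : Fin 3 →₀ ℕ) : M (d 0) (d 1) (d 2) = d := by
  ext i
  fin_cases i <;> simp [M, Finsupp.single_apply]

lemma degree_M (a b c : ℕ) : (M a b c).degree = a + b + c := by
  have h : (M a b c).degree = ∑ i : Fin 3, (M a b c) i := by
    rw [Finsupp.degree]
    apply Finset.sum_subset (Finset.subset_univ _)
    intro x _ hx
    exact Finsupp.notMem_support_iff.mp hx
  rw [h, Fin.sum_univ_three, M_apply0, M_apply1, M_apply2]

end
end GD

open GD in
/-- For `A > 0`, every nonzero homogeneous polynomial solution `f` of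
degree `n` of the PDE `A y z ∂f/∂x − x z ∂f/∂y + x y ∂f/∂z = 0` has even degree
`n = 2m` and is of the form `f = Σ_{i=0}^{m} aᵢ (x² + A y²)^{m−i} (y² + z²)^{i}`. -/
theorem gd_top_degree_pde_solutions
    (A : ℝ) (hA : 0 < A) (n : ℕ) (f : MvPolynomial (Fin 3) ℝ) (hf : f ≠ 0)
    (hhom : f.IsHomogeneous n)
    (hpde : MvPolynomial.C A * X 1 * X 2 * pderiv (0 : Fin 3) f
        - X 0 * X 2 * pderiv (1 : Fin 3) f
        + X 0 * X 1 * pderiv (2 : Fin 3) f = 0) :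
    ∃ m : ℕ, n = 2 * m ∧ ∃ a : Fin (m + 1) → ℝ,
      f = ∑ i : Fin (m + 1),
        MvPolynomial.C (a i) * (X 0 ^ 2 + MvPolynomial.C A * X 1 ^ 2) ^ (m - (i : ℕ)) *
          (X 1 ^ 2 + X 2 ^ 2) ^ (i : ℕ) := by
  classical
  have hA0 : A ≠ 0 := ne_of_gt hA
  have hDf : GD.Dop A f = 0 := by unfold GD.Dop; exact hpde
  obtain ⟨d, hd⟩ := exists_coeff_ne_zero hf
  have hdeg : d.degree = n := by
    by_contra hne
    exact hd (hhom.coeff_eq_zero hne)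
  have heta := M_eta d
  have heven : (d 0) % 2 = 0 ∧ (d 1) % 2 = 0 ∧ (d 2) % 2 = 0 := by
    by_contra hodd
    apply hd
    rw [← heta]
    exact odd_kill hA0 hDf _ _ _ hodd
  have hn : n = 2 * (d 0 / 2 + d 1 / 2 + d 2 / 2) := by
    have hdm := degree_M (d 0) (d 1) (d 2)
    rw [heta, hdeg] at hdm
    omega
  set m := d 0 / 2 + d 1 / 2 + d 2 / 2 with hm
  refine ⟨m, hn, ?_⟩
  let K : Matrix (Fin (m+1)) (Fin (m+1)) ℝ :=
    fun r i => coeff (M 0 (2*(m-(r:ℕ))) (2*(r:ℕ))) (P A ^ (m-(i:ℕ)) * Q ^ (i:ℕ))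
  have hK : ∀ r i : Fin (m+1), K r i
      = if (r:ℕ) ≤ (i:ℕ) then A^(m-(i:ℕ)) * (((i:ℕ).choose (r:ℕ) : ℕ) : ℝ) else 0 := by
    intro r i
    have hr : (r:ℕ) ≤ m := Nat.lt_succ_iff.mp r.isLt
    have hi : (i:ℕ) ≤ m := Nat.lt_succ_iff.mp i.isLt
    show coeff (M 0 (2*(m-(r:ℕ))) (2*(r:ℕ))) (P A ^ (m-(i:ℕ)) * Q ^ (i:ℕ)) = _
    rw [coeffPQ]
    split_ifs with h2 h3 h3
    · rfl
    · omega
    · exfalso; omega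
    · rfl
  have hdet : IsUnit K.det := by
    have htri : K.BlockTriangular id := by
      intro i j hij
      have hlt : (j:ℕ) < (i:ℕ) := hij
      rw [hK, if_neg (by omega)]
    rw [Matrix.det_of_upperTriangular htri, isUnit_iff_ne_zero]
    apply Finset.prod_ne_zero_iff.mpr
    intro i _
    rw [hK, if_pos le_rfl, Nat.choose_self]
    simpa using pow_ne_zero (m - (i:ℕ)) hA0
  let v : Fin (m+1) → ℝ := fun r => coeff (M 0 (2*(m-(r:ℕ))) (2*(r:ℕ))) f
  let a : Fin (m+1) → ℝ := (K⁻¹).mulVec v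
  have hKa : K.mulVec a = v := by
    show K.mulVec ((K⁻¹).mulVec v) = v
    rw [Matrix.mulVec_mulVec, Matrix.mul_nonsing_inv _ hdet, Matrix.one_mulVec]
  refine ⟨a, ?_⟩
  set g : MvPolynomial (Fin 3) ℝ := ∑ i : Fin (m + 1),
      MvPolynomial.C (a i) * (X 0 ^ 2 + MvPolynomial.C A * X 1 ^ 2) ^ (m - (i : ℕ)) *
        (X 1 ^ 2 + X 2 ^ 2) ^ (i : ℕ) with hg
  have hgPQ : g = ∑ i : Fin (m+1), MvPolynomial.C (a i) * (P A ^ (m-(i:ℕ)) * Q ^ (i:ℕ)) := by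
    rw [hg]
    apply Finset.sum_congr rfl
    intro i _
    rw [P, Q, mul_assoc]
  have hDg : GD.Dop A g = 0 := by
    rw [hgPQ]
    apply Dop_sum
    intro i _
    rw [Dop_C_mul, Dop_mul, Dop_pow Dop_P, Dop_pow Dop_Q]
    ring
  have hDh : GD.Dop A (f - g) = 0 := by
    rw [Dop_sub, hDf, hDg]; ring
  have hcg : ∀ s t : ℕ, coeff (M 0 (2*s) (2*t)) g
      = ∑ i : Fin (m+1), a i * (if s + t = (m-(i:ℕ)) + (i:ℕ) ∧ t ≤ (i:ℕ)
          then A^(m-(i:ℕ)) * (((i:ℕ).choose t : ℕ) : ℝ) else 0) := by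
    intro s t
    rw [hgPQ, coeff_sum]
    apply Finset.sum_congr rfl
    intro i _
    rw [coeff_C_mul, coeffPQ]
  have hplane : ∀ s t : ℕ, coeff (M 0 (2*s) (2*t)) (f - g) = 0 := by
    intro s t
    rw [coeff_sub]
    by_cases hst : s + t = m
    · have ht : t ≤ m := by omega
      have hs : s = m - t := by omega
      subst hs
      have hgv : coeff (M 0 (2*(m-t)) (2*t)) g = (K.mulVec a) ⟨t, by omega⟩ := by
        rw [hcg]
        have hmv : (K.mulVec a) ⟨t, by omega⟩ = ∑ i, K ⟨t, by omega⟩ i * a i := rfl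
        rw [hmv]
        apply Finset.sum_congr rfl
        intro i _
        rw [hK]
        have hi : (i:ℕ) ≤ m := Nat.lt_succ_iff.mp i.isLt
        by_cases hti : t ≤ (i:ℕ)
        · rw [if_pos (by exact ⟨by omega, hti⟩), if_pos hti]
          ring
        · rw [if_neg (by intro hh; exact hti hh.2), if_neg hti]
          ring
      rw [hgv, hKa]
      show coeff (M 0 (2*(m-t)) (2*t)) f - coeff (M 0 (2*(m-t)) (2*t)) f = 0
      ring
    · have hf0 : coeff (M 0 (2*s) (2*t)) f = 0 := by
        apply hhom.coeff_eq_zero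
        rw [degree_M, hn]
        omega
      have hg0 : coeff (M 0 (2*s) (2*t)) g = 0 := by
        rw [hcg]
        apply Finset.sum_eq_zero
        intro i _
        have hi : (i:ℕ) ≤ m := Nat.lt_succ_iff.mp i.isLt
        rw [if_neg (by rintro ⟨h1, h2⟩; omega)]
        ring
      rw [hf0, hg0]
      ring
  have heven0 : ∀ p', ∀ s t : ℕ, coeff (M (2*p') (2*s) (2*t)) (f - g) = 0 := by
    intro p'
    induction p' with
    | zero => intro s t; simpa using hplane s t
    | succ p' ih =>
      intro s t
      have h := master hDh (2*p') (2*s) (2*t)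
      rw [show 2*s+2 = 2*(s+1) by ring, show 2*t+2 = 2*(t+1) by ring,
        ih (s+1) t, ih s (t+1)] at h
      have hy : (((2*p':ℕ)):ℝ)+2 ≠ 0 := by positivity
      have h0 : A * ((((2*p':ℕ)):ℝ)+2) * coeff (M (2*p'+2) (2*s) (2*t)) (f-g) = 0 := by
        linarith
      have h1 := (mul_eq_zero.mp h0).resolve_left (mul_ne_zero hA0 hy)
      rw [show 2*(p'+1) = 2*p'+2 by ring]
      exact h1
  have hfg : f - g = 0 := by
    apply MvPolynomial.ext
    intro d'
    rw [coeff_zero, ← M_eta d']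
    by_cases ho : (d' 0) % 2 = 0 ∧ (d' 1) % 2 = 0 ∧ (d' 2) % 2 = 0
    · obtain ⟨h0', h1', h2'⟩ := ho
      obtain ⟨p', hp'⟩ : ∃ k, d' 0 = 2*k := ⟨d' 0/2, by omega⟩
      obtain ⟨q', hq'⟩ : ∃ k, d' 1 = 2*k := ⟨d' 1/2, by omega⟩
      obtain ⟨r', hr'⟩ : ∃ k, d' 2 = 2*k := ⟨d' 2/2, by omega⟩
      rw [hp', hq', hr']
      exact heven0 p' q' r'
    · exact odd_kill hA0 hDh _ _ _ ho
  exact sub_eq_zero.mp hfg
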